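/- arXiv:1302.3301 — 3 statements merged into one kernel-verified Lean document; each statement's English description precedes it below -/
import Mathlib

section
/- Let A ∈ M₂(ℝ) with tr A = 0, det A = 1, and define for any traceless B the quadratic form Q_B(z) = −(1/2)⟨J B z, z⟩ where J = [[0,−1],[1,0]] and z ∈ ℝ². Then the average of Q_B over the flow Fl^t = cos t·I + sin t·A satisfies (1/2π)∫₀^{2π} Q_B(Fl^t z) dt = (1/2) Q_{B − A B A}(z) for all z ∈ ℝ². -/
open Real Matrix MeasureTheory intervalIntegral

noncomputable def Qform (M : Matrix (Fin 2) (Fin 2) ℝ) (z : Fin 2 → ℝ) : ℝ :=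
  -(1 / 2) * (((!![0, -1; 1, 0] : Matrix (Fin 2) (Fin 2) ℝ) * M).mulVec z ⬝ᵥ z)

noncomputable def Fl (A : Matrix (Fin 2) (Fin 2) ℝ) (t : ℝ) : Matrix (Fin 2) (Fin 2) ℝ :=
  (Real.cos t) • (1 : Matrix (Fin 2) (Fin 2) ℝ) + (Real.sin t) • A

set_option maxHeartbeats 1000000 in
theorem average_of_quadratic_form
    (A B : Matrix (Fin 2) (Fin 2) ℝ)
    (htrA : A.trace = 0) (htrB : B.trace = 0) (hdet : A.det = 1)
    (z : Fin 2 → ℝ) :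
    (1 / (2 * π)) * ∫ t in (0:ℝ)..(2 * π), Qform B ((Fl A t).mulVec z)
      = (1 / 2) * Qform (B - A * B * A) z := by
  obtain ⟨α, hα⟩ : ∃ x : ℝ, Qform B z = x := ⟨_, rfl⟩
  obtain ⟨β, hβ⟩ : ∃ x : ℝ,
      -(1/2) * (((!![0, -1; 1, 0] : Matrix (Fin 2) (Fin 2) ℝ) * B).mulVec z ⬝ᵥ A.mulVec z
        + ((!![0, -1; 1, 0] : Matrix (Fin 2) (Fin 2) ℝ) * B).mulVec (A.mulVec z) ⬝ᵥ z) = x :=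
    ⟨_, rfl⟩
  obtain ⟨γ, hγ⟩ : ∃ x : ℝ,
      -(1/2) * (((!![0, -1; 1, 0] : Matrix (Fin 2) (Fin 2) ℝ) * B).mulVec (A.mulVec z) ⬝ᵥ
        A.mulVec z) = x := ⟨_, rfl⟩
  have hpt : ∀ t : ℝ, Qform B ((Fl A t).mulVec z)
      = α * Real.cos t ^ 2 + β * (Real.sin t * Real.cos t) + γ * Real.sin t ^ 2 := by
    intro t
    rw [← hα, ← hβ, ← hγ]
    simp [Qform, Fl, Matrix.mulVec, Matrix.mul_apply, dotProduct, Fin.sum_univ_two,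
      Matrix.one_apply, Matrix.add_apply, Matrix.smul_apply]
    ring
  have h1 : IntervalIntegrable (fun t : ℝ => α * Real.cos t ^ 2) volume 0 (2*π) :=
    (Continuous.intervalIntegrable (by fun_prop) _ _)
  have h2 : IntervalIntegrable (fun t : ℝ => β * (Real.sin t * Real.cos t)) volume 0 (2*π) :=
    (Continuous.intervalIntegrable (by fun_prop) _ _)
  have h3 : IntervalIntegrable (fun t : ℝ => γ * Real.sin t ^ 2) volume 0 (2*π) :=
    (Continuous.intervalIntegrable (by fun_prop) _ _)
  have hint : ∫ t in (0:ℝ)..(2 * π), Qform B ((Fl A t).mulVec z) = π * α + π * γ := by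
    rw [intervalIntegral.integral_congr (g := fun t =>
        α * Real.cos t ^ 2 + β * (Real.sin t * Real.cos t) + γ * Real.sin t ^ 2)
        (fun t _ => hpt t)]
    rw [intervalIntegral.integral_add (h1.add h2) h3, intervalIntegral.integral_add h1 h2,
      intervalIntegral.integral_const_mul, intervalIntegral.integral_const_mul,
      intervalIntegral.integral_const_mul, integral_cos_sq, integral_sin_mul_cos₁,
      integral_sin_sq]
    simp [Real.sin_two_pi, Real.cos_two_pi]
    ring
  rw [hint]
  have hkey : α + γ = Qform (B - A * B * A) z := by
    have ha : A 1 1 = -(A 0 0) := by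
      have h := htrA; rw [Matrix.trace_fin_two] at h; linarith
    rw [← hα, ← hγ]
    simp [Qform, Matrix.mulVec, Matrix.mul_apply, dotProduct, Fin.sum_univ_two,
      Matrix.sub_apply, ha]
    ring
  have hπ : π ≠ 0 := Real.pi_ne_zero
  rw [← hkey]
  field_simp
end

section
/- With the same setup (A, B traceless 2×2 real matrices, det A = 1, Fl^t = cos t·I + sin t·A, Q_B(z) = −(1/2)⟨JBz,z⟩), the integrating operator satisfies S(Q_B)(z) := (1/2π)∫₀^{2π}(t−π) Q_B(Fl^t z) dt = (1/4) Q_{[A,B]}(z) for all z ∈ ℝ², where [A,B] = AB − BA. -/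
open Real Matrix MeasureTheory intervalIntegral

/-- Cross (bilinear) term of the quadratic form `Q_B` at `z` and `A z`. -/
noncomputable def Cr (A B : Matrix (Fin 2) (Fin 2) ℝ) (z : Fin 2 → ℝ) : ℝ :=
  -(1 / 2) * ((((!![0, -1; 1, 0] : Matrix (Fin 2) (Fin 2) ℝ) * B).mulVec z ⬝ᵥ A.mulVec z)
    + (((!![0, -1; 1, 0] : Matrix (Fin 2) (Fin 2) ℝ) * B).mulVec (A.mulVec z) ⬝ᵥ z))

lemma hs2 (t : ℝ) : HasDerivAt (fun u : ℝ => Real.sin (2 * u)) (Real.cos (2 * t) * 2) t := by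
  exact ((Real.hasDerivAt_sin (2 * t)).comp t ((hasDerivAt_id t).const_mul 2)).congr_deriv (by simp)

lemma hc2 (t : ℝ) : HasDerivAt (fun u : ℝ => Real.cos (2 * u)) (-Real.sin (2 * t) * 2) t := by
  exact ((Real.hasDerivAt_cos (2 * t)).comp t ((hasDerivAt_id t).const_mul 2)).congr_deriv (by simp)

lemma sin4pi : Real.sin (2 * (2 * π)) = 0 := by
  rw [show (2:ℝ) * (2 * π) = (4:ℕ) * π by push_cast; ring]; exact Real.sin_nat_mul_pi 4

lemma cos4pi : Real.cos (2 * (2 * π)) = 1 := by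
  rw [show (2:ℝ) * (2 * π) = (2:ℕ) * (2 * π) by push_cast; ring]; exact Real.cos_nat_mul_two_pi 2

lemma I_cos : (∫ t in (0:ℝ)..(2 * π), (t - π) * Real.cos t ^ 2) = 0 := by
  have h : ∀ t ∈ Set.uIcc (0:ℝ) (2 * π), HasDerivAt
      (fun t : ℝ => t ^ 2 / 4 - π * t / 2 + (t - π) * Real.sin (2 * t) / 4
        + Real.cos (2 * t) / 8) ((t - π) * Real.cos t ^ 2) t := by
    intro t _
    have hpoly : HasDerivAt (fun u : ℝ => u ^ 2 / 4 - π * u / 2) (2 * t / 4 - π / 2) t := by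
      exact (((hasDerivAt_pow 2 t).div_const 4).sub (((hasDerivAt_id t).const_mul π).div_const 2)).congr_deriv (by push_cast; ring)
    have h2 : HasDerivAt (fun u : ℝ => (u - π) * Real.sin (2 * u) / 4)
        ((1 * Real.sin (2 * t) + (t - π) * (Real.cos (2 * t) * 2)) / 4) t :=
      (((hasDerivAt_id t).sub_const π).mul (hs2 t)).div_const 4
    have h3 : HasDerivAt (fun u : ℝ => Real.cos (2 * u) / 8) (-Real.sin (2 * t) * 2 / 8) t :=
      (hc2 t).div_const 8
    have h4 := (hpoly.add h2).add h3
    convert h4 using 1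
    rfl
    rfl
    rfl
    have hc := Real.cos_sq t
    rw [hc]; ring
  rw [intervalIntegral.integral_eq_sub_of_hasDerivAt h (by
    apply Continuous.intervalIntegrable; continuity)]
  simp only [sin4pi, cos4pi, mul_zero, Real.sin_zero, Real.cos_zero]
  ring

lemma I_one : (∫ t in (0:ℝ)..(2 * π), (t - π)) = 0 := by
  have h : ∀ t ∈ Set.uIcc (0:ℝ) (2 * π), HasDerivAt
      (fun t : ℝ => t ^ 2 / 2 - π * t) (t - π) t := by
    intro t _
    exact (((hasDerivAt_pow 2 t).div_const 2).sub
      ((hasDerivAt_id t).const_mul π)).congr_deriv (by push_cast; ring)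
  rw [intervalIntegral.integral_eq_sub_of_hasDerivAt h (by
    apply Continuous.intervalIntegrable; continuity)]
  ring

lemma I_sin : (∫ t in (0:ℝ)..(2 * π), (t - π) * Real.sin t ^ 2) = 0 := by
  have h : ∀ t : ℝ, (t - π) * Real.sin t ^ 2 = (t - π) - (t - π) * Real.cos t ^ 2 := by
    intro t
    have := Real.sin_sq_add_cos_sq t
    linear_combination (t - π) * this
  rw [intervalIntegral.integral_congr (g := fun t => (t - π) - (t - π) * Real.cos t ^ 2)
    (fun t _ => h t)]
  rw [intervalIntegral.integral_sub (by apply Continuous.intervalIntegrable; continuity)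
    (by apply Continuous.intervalIntegrable; continuity), I_one, I_cos]
  ring

lemma I_cross : (∫ t in (0:ℝ)..(2 * π), (t - π) * (Real.sin t * Real.cos t)) = -(π / 2) := by
  have h : ∀ t ∈ Set.uIcc (0:ℝ) (2 * π), HasDerivAt
      (fun t : ℝ => -((t - π) * Real.cos (2 * t)) / 4 + Real.sin (2 * t) / 8)
      ((t - π) * (Real.sin t * Real.cos t)) t := by
    intro t _
    have h1 : HasDerivAt (fun u : ℝ => -((u - π) * Real.cos (2 * u)) / 4)
        (-(1 * Real.cos (2 * t) + (t - π) * (-Real.sin (2 * t) * 2)) / 4) t :=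
      ((((hasDerivAt_id t).sub_const π).mul (hc2 t)).neg).div_const 4
    have h2 : HasDerivAt (fun u : ℝ => Real.sin (2 * u) / 8) (Real.cos (2 * t) * 2 / 8) t :=
      (hs2 t).div_const 8
    have h4 := h1.add h2
    convert h4 using 1
    rfl
    rfl
    rfl
    have hst := Real.sin_two_mul t
    rw [show Real.sin t * Real.cos t = Real.sin (2 * t) / 2 by rw [hst]; ring]
    ring
  rw [intervalIntegral.integral_eq_sub_of_hasDerivAt h (by
    apply Continuous.intervalIntegrable; continuity)]
  simp only [sin4pi, cos4pi, mul_zero, Real.sin_zero, Real.cos_zero]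
  ring

lemma key_pointwise (A B : Matrix (Fin 2) (Fin 2) ℝ) (z : Fin 2 → ℝ) (t : ℝ) :
    (t - π) * Qform B ((Fl A t).mulVec z)
      = (Qform B z) * ((t - π) * Real.cos t ^ 2)
        + (Qform B (A.mulVec z)) * ((t - π) * Real.sin t ^ 2)
        + (Cr A B z) * ((t - π) * (Real.sin t * Real.cos t)) := by
  simp [Qform, Fl, Cr, Matrix.mulVec, Matrix.mul_apply, Fin.sum_univ_two, dotProduct,
    Matrix.one_apply]
  ring

lemma key_alg (A B : Matrix (Fin 2) (Fin 2) ℝ)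
    (htrA : A.trace = 0) (htrB : B.trace = 0) (z : Fin 2 → ℝ) :
    Qform (A * B - B * A) z = -Cr A B z := by
  have hA : A 1 1 = -A 0 0 := by
    have := htrA
    simp [Matrix.trace, Fin.sum_univ_two, Matrix.diag] at this
    linarith
  have hB : B 1 1 = -B 0 0 := by
    have := htrB
    simp [Matrix.trace, Fin.sum_univ_two, Matrix.diag] at this
    linarith
  simp [Qform, Cr, Matrix.mulVec, Matrix.mul_apply, Fin.sum_univ_two, dotProduct, hA, hB]
  ring

theorem integrating_operator_of_quadratic_form
    (A B : Matrix (Fin 2) (Fin 2) ℝ)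
    (htrA : A.trace = 0) (htrB : B.trace = 0) (hdet : A.det = 1)
    (z : Fin 2 → ℝ) :
    (1 / (2 * π)) * ∫ t in (0:ℝ)..(2 * π), (t - π) * Qform B ((Fl A t).mulVec z)
      = (1 / 4) * Qform (A * B - B * A) z := by
  have hInt : (∫ t in (0:ℝ)..(2 * π), (t - π) * Qform B ((Fl A t).mulVec z))
      = (Qform B z) * (∫ t in (0:ℝ)..(2 * π), (t - π) * Real.cos t ^ 2)
        + (Qform B (A.mulVec z)) * (∫ t in (0:ℝ)..(2 * π), (t - π) * Real.sin t ^ 2)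
        + (Cr A B z) * (∫ t in (0:ℝ)..(2 * π), (t - π) * (Real.sin t * Real.cos t)) := by
    rw [intervalIntegral.integral_congr (g := fun t =>
      (Qform B z) * ((t - π) * Real.cos t ^ 2)
        + (Qform B (A.mulVec z)) * ((t - π) * Real.sin t ^ 2)
        + (Cr A B z) * ((t - π) * (Real.sin t * Real.cos t)))
      (fun t _ => key_pointwise A B z t)]
    rw [intervalIntegral.integral_add (by apply Continuous.intervalIntegrable; continuity)
      (by apply Continuous.intervalIntegrable; continuity),
      intervalIntegral.integral_add (by apply Continuous.intervalIntegrable; continuity)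
      (by apply Continuous.intervalIntegrable; continuity),
      intervalIntegral.integral_const_mul, intervalIntegral.integral_const_mul,
      intervalIntegral.integral_const_mul]
  rw [hInt, I_cos, I_sin, I_cross, key_alg A B htrA htrB z]
  have hπ : (π : ℝ) ≠ 0 := Real.pi_ne_zero
  field_simp
  ring
end

section
/- With A, B, C traceless real 2×2 matrices, det A = 1, Fl^t = cos t·I + sin t·A, and Q_M(z) = −(1/2)⟨JMz,z⟩: for all z ∈ ℝ², (1/2π)∫₀^{2π} Q_B(Fl^t z) Q_C(Fl^t z) dt = (1/4) Q_{B−ABA}(z) Q_{C−ACA}(z) + (1/8) Q_{B+ABA}(z) Q_{C+ACA}(z) + (1/8) Q_{[B,A]}(z) Q_{[C,A]}(z). -/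
open Real Matrix MeasureTheory intervalIntegral

lemma trig_key (p0 p1 p2 p3 p4 : ℝ) :
    ∫ t in (0:ℝ)..(2*π),
      (p0 * cos t^4 + p1 * (cos t^3 * sin t) + p2 * (cos t^2 * sin t^2)
        + p3 * (cos t * sin t^3) + p4 * sin t^4)
      = p0 * (3*π/4) + p2 * (π/4) + p4 * (3*π/4) := by
  have hderiv : ∀ t : ℝ, HasDerivAt (fun t : ℝ =>
      p0 * (sin t * cos t^3/4 + 3/8*(t + sin t * cos t))
      + p1 * (-(cos t^4)/4)
      + p2 * ((t + sin t * cos t)/2 - (sin t * cos t^3/4 + 3/8*(t + sin t * cos t)))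
      + p3 * (sin t^4/4)
      + p4 * (t - (t + sin t * cos t) + (sin t * cos t^3/4 + 3/8*(t + sin t * cos t))))
      (p0 * cos t^4 + p1 * (cos t^3 * sin t) + p2 * (cos t^2 * sin t^2)
        + p3 * (cos t * sin t^3) + p4 * sin t^4) t := by
    intro t
    have hs := Real.hasDerivAt_sin t
    have hc := Real.hasDerivAt_cos t
    have h1 : HasDerivAt (fun t : ℝ => sin t * cos t^3)
        (cos t * cos t^3 + sin t * (3 * cos t^2 * (-sin t))) t := hs.mul (hc.pow 3)
    have h2 : HasDerivAt (fun t : ℝ => sin t * cos t)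
        (cos t * cos t + sin t * (-sin t)) t := hs.mul hc
    have h3 : HasDerivAt (fun t : ℝ => cos t^4) (4 * cos t^3 * (-sin t)) t := hc.pow 4
    have h4 : HasDerivAt (fun t : ℝ => sin t^4) (4 * sin t^3 * (cos t)) t := hs.pow 4
    have hid := hasDerivAt_id t
    have H := ((((h1.div_const 4).add ((hid.add h2).const_mul (3/8:ℝ))).const_mul p0).add
        ((h3.neg.div_const 4).const_mul p1)).add
        ((((hid.add h2).div_const 2).sub ((h1.div_const 4).add ((hid.add h2).const_mul (3/8:ℝ)))).const_mul p2)
    have H2 := (H.add ((h4.div_const 4).const_mul p3)).add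
        (((hid.sub (hid.add h2)).add ((h1.div_const 4).add ((hid.add h2).const_mul (3/8:ℝ)))).const_mul p4)
    refine H2.congr_deriv (Eq.symm ?_)
    have hp := Real.sin_sq_add_cos_sq t
    linear_combination (p0*(3*Real.cos t^2/4 + 3/8) + p2*(Real.cos t^2/4 + 1/8)
      + p4*(Real.sin t^2 - Real.cos t^2 + 3*Real.cos t^2/4 + 3/8)) * hp
  have hcont : Continuous fun t : ℝ =>
      p0 * cos t^4 + p1 * (cos t^3 * sin t) + p2 * (cos t^2 * sin t^2)
        + p3 * (cos t * sin t^3) + p4 * sin t^4 := by fun_prop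
  rw [intervalIntegral.integral_eq_sub_of_hasDerivAt (fun t _ => hderiv t)
    (hcont.intervalIntegrable _ _)]
  simp [Real.sin_two_pi, Real.cos_two_pi]
  ring

lemma Qform_flow (A B : Matrix (Fin 2) (Fin 2) ℝ) (hA : A.trace = 0) (z : Fin 2 → ℝ) (t : ℝ) :
    Qform B ((Fl A t).mulVec z)
      = cos t^2 * Qform B z + sin t^2 * Qform B (A.mulVec z)
        + cos t * sin t * Qform (B*A - A*B) z := by
  have h11 : A 1 1 = -A 0 0 := by
    have := Matrix.trace_fin_two A; rw [this] at hA; linarith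
  simp [Qform, Fl, Matrix.mulVec, Matrix.mul_apply, dotProduct, Fin.sum_univ_succ,
    Matrix.one_apply, Matrix.sub_apply, Matrix.add_apply, Matrix.smul_apply, h11]
  ring

lemma Qform_sub_ABA (A B : Matrix (Fin 2) (Fin 2) ℝ) (hA : A.trace = 0) (z : Fin 2 → ℝ) :
    Qform (B - A*B*A) z = Qform B z + Qform B (A.mulVec z) := by
  have h11 : A 1 1 = -A 0 0 := by
    have := Matrix.trace_fin_two A; rw [this] at hA; linarith
  simp [Qform, Matrix.mulVec, Matrix.mul_apply, dotProduct, Fin.sum_univ_succ,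
    Matrix.sub_apply, h11]
  ring

lemma Qform_add_ABA (A B : Matrix (Fin 2) (Fin 2) ℝ) (hA : A.trace = 0) (z : Fin 2 → ℝ) :
    Qform (B + A*B*A) z = Qform B z - Qform B (A.mulVec z) := by
  have h11 : A 1 1 = -A 0 0 := by
    have := Matrix.trace_fin_two A; rw [this] at hA; linarith
  simp [Qform, Matrix.mulVec, Matrix.mul_apply, dotProduct, Fin.sum_univ_succ,
    Matrix.add_apply, h11]
  ring

theorem average_of_product_of_quadratic_forms
    (A B C : Matrix (Fin 2) (Fin 2) ℝ)
    (htrA : A.trace = 0) (htrB : B.trace = 0) (htrC : C.trace = 0) (hdet : A.det = 1)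
    (z : Fin 2 → ℝ) :
    (1 / (2 * π)) * ∫ t in (0:ℝ)..(2 * π),
        Qform B ((Fl A t).mulVec z) * Qform C ((Fl A t).mulVec z)
      = (1 / 4) * Qform (B - A * B * A) z * Qform (C - A * C * A) z
        + (1 / 8) * Qform (B + A * B * A) z * Qform (C + A * C * A) z
        + (1 / 8) * Qform (B * A - A * B) z * Qform (C * A - A * C) z := by
  set u1 := Qform B z with hu1
  set u2 := Qform B (A.mulVec z) with hu2
  set u3 := Qform (B*A - A*B) z with hu3
  set v1 := Qform C z with hv1
  set v2 := Qform C (A.mulVec z) with hv2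
  set v3 := Qform (C*A - A*C) z with hv3
  have hint : ∀ t : ℝ, Qform B ((Fl A t).mulVec z) * Qform C ((Fl A t).mulVec z)
      = (u1*v1) * cos t^4 + (u1*v3 + u3*v1) * (cos t^3 * sin t)
        + (u1*v2 + u2*v1 + u3*v3) * (cos t^2 * sin t^2)
        + (u2*v3 + u3*v2) * (cos t * sin t^3) + (u2*v2) * sin t^4 := by
    intro t
    rw [Qform_flow A B htrA z t, Qform_flow A C htrA z t]
    ring
  rw [intervalIntegral.integral_congr (fun t _ => hint t), trig_key,
    Qform_sub_ABA A B htrA z, Qform_sub_ABA A C htrA z,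
    Qform_add_ABA A B htrA z, Qform_add_ABA A C htrA z]
  have hπ : π ≠ 0 := Real.pi_ne_zero
  field_simp
  ring
end
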